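/- Let n be an odd positive integer and let a_0, …, a_n be real numbers with a_n ≠ 0. Define the function P of a real variable m by P(m) = Σ_{j=0}^{n} a_j·2^j·(2m−n)_{n−j}·[4·p_{j+1}(m) + (2m−j)·p_j(m)], where the Pochhammer factors are evaluated at the real argument m. Then P(n/2) = a_n·2^{n+2}·(−n/2)_{n+1}·(1/2)_{n+1}, and this value is nonzero; in particular, P is not the identically zero function. -/

import Mathlib

open Polynomial Finset

/-- The Pochhammer symbol (rising factorial) `(α)_k`. -/
noncomputable def poch (α : ℝ) (k : ℕ) : ℝ := ∏ i ∈ Finset.range k, (α + i)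

/-- The Stirling numbers of the second kind. -/
noncomputable def stirling2 (n k : ℕ) : ℝ :=
  (1 / (Nat.factorial k) : ℝ) *
    ∑ j ∈ Finset.range (k + 1), (k.choose j : ℝ) * (-1) ^ (k - j) * (j : ℝ) ^ n

/-- The quantity `p_j(m)` for a real argument `m`. -/
noncomputable def pPoly (j : ℕ) (m : ℝ) : ℝ :=
  ∑ k ∈ Finset.range (j + 1),
    stirling2 j k * poch (-m) k * poch (1 / 2) k * poch (2 * m - j + 1) (j - k)

noncomputable def Esum (k n : ℕ) : ℝ :=
  ∑ j ∈ Finset.range (k + 1), (-1) ^ j * (k.choose j : ℝ) * (j : ℝ) ^ n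

lemma Esum_rec (k n : ℕ) :
    Esum (k + 1) n = - ∑ t ∈ Finset.range n, (n.choose t : ℝ) * Esum k t := by
  have hshift : ∑ j ∈ Finset.range (k + 1),
      (-1 : ℝ) ^ j * (k.choose (j+1) : ℝ) * ((j:ℝ)+1) ^ n = (0:ℝ) ^ n - Esum k n := by
    have h2 : ∑ i ∈ Finset.range (k + 2), (-1 : ℝ) ^ i * (k.choose i : ℝ) * (i : ℝ) ^ n
        = Esum k n := by
      rw [Finset.sum_range_succ]
      simp [Esum, Nat.choose_succ_self]
    rw [Finset.sum_range_succ'] at h2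
    push_cast at h2
    have h3 : ∑ j ∈ Finset.range (k + 1),
        (-1:ℝ) ^ (j+1) * (k.choose (j+1) : ℝ) * ((j:ℝ)+1) ^ n = Esum k n - (0:ℝ) ^ n := by
      rw [← h2]; simp
    have h4 : ∑ j ∈ Finset.range (k + 1),
        (-1 : ℝ) ^ j * (k.choose (j+1) : ℝ) * ((j:ℝ)+1) ^ n
        = - ∑ j ∈ Finset.range (k + 1),
            (-1:ℝ) ^ (j+1) * (k.choose (j+1) : ℝ) * ((j:ℝ)+1) ^ n := by
      rw [← Finset.sum_neg_distrib]
      exact Finset.sum_congr rfl fun j _ => by ring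
    rw [h4, h3]; ring
  have hA : ∑ j ∈ Finset.range (k + 1), (-1 : ℝ) ^ j * (k.choose j : ℝ) * ((j:ℝ)+1) ^ n
      = ∑ t ∈ Finset.range (n + 1), (n.choose t : ℝ) * Esum k t := by
    calc ∑ j ∈ Finset.range (k + 1), (-1 : ℝ) ^ j * (k.choose j : ℝ) * ((j:ℝ)+1) ^ n
        = ∑ j ∈ Finset.range (k + 1), ∑ t ∈ Finset.range (n + 1),
            (n.choose t : ℝ) * ((-1) ^ j * (k.choose j : ℝ) * (j:ℝ) ^ t) := by
          refine Finset.sum_congr rfl fun j _ => ?_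
          rw [show ((j:ℝ)+1)^n = ∑ t ∈ Finset.range (n+1),
              (j:ℝ)^t * 1^(n-t) * (n.choose t) from add_pow (j:ℝ) 1 n, Finset.mul_sum]
          exact Finset.sum_congr rfl fun t _ => by ring
      _ = ∑ t ∈ Finset.range (n + 1), (n.choose t : ℝ) * Esum k t := by
          rw [Finset.sum_comm]
          refine Finset.sum_congr rfl fun t _ => ?_
          rw [Esum, Finset.mul_sum]
  have main : Esum (k+1) n = Esum k n - ∑ t ∈ Finset.range (n + 1), (n.choose t : ℝ) * Esum k t := by
    rw [Esum, Finset.sum_range_succ']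
    have hcs : ∀ j, ((k+1).choose (j+1) : ℝ) = (k.choose j : ℝ) + (k.choose (j+1) : ℝ) := by
      intro j; rw [Nat.choose_succ_succ]; push_cast; ring
    have : ∑ j ∈ Finset.range (k + 1),
        (-1:ℝ) ^ (j+1) * ((k+1).choose (j+1) : ℝ) * ((j:ℝ)+1) ^ n
        = - (∑ j ∈ Finset.range (k + 1), (-1 : ℝ) ^ j * (k.choose j : ℝ) * ((j:ℝ)+1) ^ n)
          - (∑ j ∈ Finset.range (k + 1), (-1 : ℝ) ^ j * (k.choose (j+1) : ℝ) * ((j:ℝ)+1) ^ n) := by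
      rw [← Finset.sum_neg_distrib, ← Finset.sum_sub_distrib]
      refine Finset.sum_congr rfl fun j _ => ?_
      rw [hcs j]; ring
    push_cast
    rw [this, hshift, ← hA]
    simp only [Nat.choose_zero_right, Nat.cast_one, one_mul]
    ring
  rw [main, Finset.sum_range_succ, Nat.choose_self, Nat.cast_one, one_mul]
  ring

lemma Esum_eq (k : ℕ) : ∀ n ≤ k, Esum k n = if n = k then (-1)^k * (Nat.factorial k : ℝ) else 0 := by
  induction k with
  | zero =>
      intro n hn
      interval_cases n
      simp [Esum]
  | succ k ih =>
      intro n hn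
      rw [Esum_rec]
      rcases Nat.lt_succ_iff_lt_or_eq.mp (Nat.lt_succ_of_le hn) with h | h
      · rw [if_neg (by omega)]
        have : ∀ t ∈ Finset.range n, (n.choose t : ℝ) * Esum k t = 0 := by
          intro t ht
          have ht' : t < n := Finset.mem_range.mp ht
          rw [ih t (by omega), if_neg (by omega), mul_zero]
        rw [Finset.sum_eq_zero this]; ring
      · subst h
        rw [if_pos rfl]
        rw [Finset.sum_eq_single_of_mem k (Finset.mem_range.mpr (by omega))]
        · rw [ih k le_rfl, if_pos rfl, Nat.choose_succ_self_right]
          rw [Nat.factorial_succ]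
          push_cast
          ring
        · intro t ht htk
          have ht' : t < k + 1 := Finset.mem_range.mp ht
          rw [ih t (by omega), if_neg htk, mul_zero]

lemma stirling2_diag (k : ℕ) : stirling2 k k = 1 := by
  unfold stirling2
  have key : ∑ j ∈ Finset.range (k+1), (k.choose j:ℝ) * (-1)^(k-j) * (j:ℝ)^k
      = (-1)^k * Esum k k := by
    rw [Esum, Finset.mul_sum]
    refine Finset.sum_congr rfl fun j hj => ?_
    have hj' : j ≤ k := Nat.lt_succ_iff.mp (Finset.mem_range.mp hj)
    have h1 : (-1:ℝ)^(k-j) * (-1:ℝ)^j = (-1)^k := by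
      rw [← pow_add, Nat.sub_add_cancel hj']
    have h2 : ((-1:ℝ)^j)^2 = 1 := by
      rw [← pow_mul, mul_comm, pow_mul]; norm_num
    linear_combination (((-1:ℝ)^j) * (k.choose j : ℝ) * (j:ℝ)^k) * h1 +
      (-((k.choose j:ℝ)) * (-1:ℝ)^(k-j) * (j:ℝ)^k) * h2
  rw [key, Esum_eq k k le_rfl, if_pos rfl]
  have h11 : ((-1:ℝ)^k) * ((-1:ℝ)^k) = 1 := by
    rw [← pow_add]; exact Even.neg_one_pow ⟨k, rfl⟩
  have hf : (Nat.factorial k : ℝ) ≠ 0 := Nat.cast_ne_zero.mpr (Nat.factorial_ne_zero k)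
  field_simp
  linear_combination h11

lemma poch_zero_pos {k : ℕ} (hk : 0 < k) : poch 0 k = 0 :=
  Finset.prod_eq_zero (Finset.mem_range.mpr hk) (by simp)

theorem stmt18 (n : ℕ) (hn : Odd n) (hpos : 0 < n) (a : ℕ → ℝ) (han : a n ≠ 0)
    (P : ℝ → ℝ)
    (hP : ∀ m : ℝ, P m =
      ∑ j ∈ Finset.range (n + 1),
        a j * 2 ^ j * poch (2 * m - n) (n - j) *
          (4 * pPoly (j + 1) m + (2 * m - j) * pPoly j m)) :
    P ((n : ℝ) / 2) =
        a n * 2 ^ (n + 2) * poch (-(n : ℝ) / 2) (n + 1) * poch (1 / 2) (n + 1) ∧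
      P ((n : ℝ) / 2) ≠ 0 ∧ ¬ ∀ m : ℝ, P m = 0 := by
  set m : ℝ := (n : ℝ) / 2 with hmdef
  have hm : 2 * m - (n : ℝ) = 0 := by rw [hmdef]; ring
  have hpoly : pPoly (n + 1) m = poch (-(n:ℝ)/2) (n+1) * poch (1/2) (n+1) := by
    unfold pPoly
    have harg : 2 * m - ((n:ℕ)+1 : ℕ) + 1 = 0 := by push_cast; rw [hmdef]; ring
    rw [Finset.sum_eq_single_of_mem (n+1) (Finset.mem_range.mpr (by omega))]
    · rw [show (2 * m - ((n+1:ℕ):ℝ) + 1) = 0 by push_cast; rw [hmdef]; ring]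
      rw [stirling2_diag, Nat.sub_self]
      rw [show poch 0 0 = 1 from by simp [poch]]
      rw [show -m = -(n:ℝ)/2 by rw [hmdef]; ring]
      ring
    · intro k hk hkne
      have hk' : k < n + 1 + 1 := Finset.mem_range.mp hk
      rw [show (2 * m - ((n+1:ℕ):ℝ) + 1) = 0 by push_cast; rw [hmdef]; ring]
      rw [poch_zero_pos (by omega)]
      ring
  have hval : P m = a n * 2 ^ (n + 2) * poch (-(n : ℝ) / 2) (n + 1) * poch (1 / 2) (n + 1) := by
    rw [hP m]
    rw [Finset.sum_eq_single_of_mem n (Finset.mem_range.mpr (by omega))]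
    · rw [hm, Nat.sub_self, show poch 0 0 = 1 from by simp [poch], hpoly]
      ring
    · intro j hj hjne
      have hj' : j < n + 1 := Finset.mem_range.mp hj
      rw [hm, poch_zero_pos (by omega)]
      ring
  have hne1 : poch (-(n : ℝ) / 2) (n + 1) ≠ 0 := by
    rw [poch]
    rw [Finset.prod_ne_zero_iff]
    intro i _
    intro h
    have : (n : ℝ) = 2 * i := by linarith
    have : n = 2 * i := by exact_mod_cast this
    exact (Nat.not_even_iff_odd.mpr hn) ⟨i, by omega⟩
  have hne2 : poch (1/2 : ℝ) (n + 1) ≠ 0 := by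
    rw [poch, Finset.prod_ne_zero_iff]
    intro i _
    positivity
  have hPne : P m ≠ 0 := by
    rw [hval]
    apply mul_ne_zero (mul_ne_zero (mul_ne_zero han (by positivity)) hne1) hne2
  exact ⟨hval, hPne, fun h => hPne (h m)⟩
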